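/- Let m ≥ 3 be odd and q a primitive m-th root of unity, and write b = x12, c = x21 in O_q(M_2(k)). Then every algebra automorphism σ of O_q(M_2(k)) satisfies σ((b,c)) = (b,c), where (b,c) is the two-sided ideal generated by b and c. In particular (b,c) is a completely prime ideal with O_q(M_2(k))/(b,c) ≅ k[a,d] and (b,c)^m ∩ Z = (v, w, t_1, …, t_{m−1}) where v = b^m, w = c^m, t_r = b^r c^{m−r}. -/

import Mathlib

/- STATEMENT 0: In O_q(M_2(k)) with q a primitive m-th root of unity (k alg. closed,
char 0), the elements x11^m, x12^m, x21^m, x22^m are central. -/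

noncomputable section

/-- The generator `x i j` of the free algebra on the four symbols. -/
def QM2Gen (k : Type*) [Field k] (i j : Fin 2) : FreeAlgebra k (Fin 2 × Fin 2) :=
  FreeAlgebra.ι k (i, j)

/-- The defining relations of `O_q(M_2(k))`:
`x12 x11 = q x11 x12`, `x21 x11 = q x11 x21`, `x22 x12 = q x12 x22`,
`x22 x21 = q x21 x22`, `x21 x12 = x12 x21`,
`x22 x11 = x11 x22 + (q - q⁻¹) x12 x21`. -/
inductive QM2Rel (k : Type*) [Field k] (q : k) :
    FreeAlgebra k (Fin 2 × Fin 2) → FreeAlgebra k (Fin 2 × Fin 2) → Prop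
  | r1 : QM2Rel k q (QM2Gen k 0 1 * QM2Gen k 0 0) (q • (QM2Gen k 0 0 * QM2Gen k 0 1))
  | r2 : QM2Rel k q (QM2Gen k 1 0 * QM2Gen k 0 0) (q • (QM2Gen k 0 0 * QM2Gen k 1 0))
  | r3 : QM2Rel k q (QM2Gen k 1 1 * QM2Gen k 0 1) (q • (QM2Gen k 0 1 * QM2Gen k 1 1))
  | r4 : QM2Rel k q (QM2Gen k 1 1 * QM2Gen k 1 0) (q • (QM2Gen k 1 0 * QM2Gen k 1 1))
  | r5 : QM2Rel k q (QM2Gen k 1 0 * QM2Gen k 0 1) (QM2Gen k 0 1 * QM2Gen k 1 0)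
  | r6 : QM2Rel k q (QM2Gen k 1 1 * QM2Gen k 0 0)
      (QM2Gen k 0 0 * QM2Gen k 1 1 + (q - q⁻¹) • (QM2Gen k 0 1 * QM2Gen k 1 0))

/-- The quantized coordinate ring `O_q(M_2(k))`. -/
abbrev QM2 (k : Type*) [Field k] (q : k) := RingQuot (QM2Rel k q)

/-- The generators `x i j` of `O_q(M_2(k))`. -/
def qx (k : Type*) [Field k] (q : k) (i j : Fin 2) : QM2 k q :=
  RingQuot.mkAlgHom k (QM2Rel k q) (QM2Gen k i j)

/-! ### Auxiliary lemmas -/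

section Aux

open MvPolynomial in
/-- Jacobian-style lemma: `k[X₀,X₁]` is not generated by a single element. -/
lemma jac_aux (k : Type*) [Field k] (p : MvPolynomial (Fin 2) k)
    (h0 : MvPolynomial.X 0 ∈ Algebra.adjoin k {p})
    (h1 : MvPolynomial.X 1 ∈ Algebra.adjoin k {p}) : False := by
  have key : ∀ f ∈ Algebra.adjoin k {p},
      pderiv 0 f * pderiv 1 p = pderiv 1 f * pderiv 0 p := by
    intro f hf
    induction hf using Algebra.adjoin_induction with
    | mem x hx => rw [Set.mem_singleton_iff] at hx; subst hx; ring
    | algebraMap r => rw [MvPolynomial.algebraMap_eq]; simp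
    | add x y hx hy ihx ihy => rw [map_add, map_add, add_mul, add_mul, ihx, ihy]
    | mul x y hx hy ihx ihy =>
        rw [pderiv_mul, pderiv_mul, add_mul, add_mul]
        linear_combination y * ihx + x * ihy
  have hp1 : pderiv (1 : Fin 2) p = 0 := by
    have h := key _ h0
    simp only [pderiv_X_self, one_mul] at h
    rw [h, pderiv_X_of_ne (by decide), zero_mul]
  have key2 : ∀ f ∈ Algebra.adjoin k {p}, pderiv (1 : Fin 2) f = 0 := by
    intro f hf
    induction hf using Algebra.adjoin_induction with
    | mem x hx => rw [Set.mem_singleton_iff] at hx; subst hx; exact hp1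
    | algebraMap r => rw [MvPolynomial.algebraMap_eq]; simp
    | add x y hx hy ihx ihy => rw [map_add, ihx, ihy, add_zero]
    | mul x y hx hy ihx ihy => rw [pderiv_mul, ihx, ihy, zero_mul, mul_zero, add_zero]
  have h10 : (1 : MvPolynomial (Fin 2) k) = 0 := by
    have h := key2 _ h1
    rwa [pderiv_X_self] at h
  exact one_ne_zero h10

lemma list_prod_bc {A : Type*} [Ring A] (b c : A) (hcb : c * b = b * c) :
    ∀ l : List A, (∀ x ∈ l, x = b ∨ x = c) →
      ∃ r ≤ l.length, l.prod = b ^ r * c ^ (l.length - r) := by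
  intro l
  induction l with
  | nil => intro _; exact ⟨0, le_refl 0, by simp⟩
  | cons a t ih =>
    intro h
    obtain ⟨r, hr, hp⟩ := ih (fun x hx => h x (List.mem_cons_of_mem a hx))
    rcases h a List.mem_cons_self with rfl | rfl
    · refine ⟨r + 1, Nat.succ_le_succ hr, ?_⟩
      rw [List.prod_cons, hp, List.length_cons, Nat.succ_sub_succ, ← mul_assoc, ← pow_succ']
    · refine ⟨r, hr.trans (Nat.le_succ _), ?_⟩
      have hcbr : Commute a (b ^ r) := (show Commute a b from hcb).pow_right r
      rw [List.prod_cons, hp, ← mul_assoc, hcbr.eq, mul_assoc, ← pow_succ',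
        List.length_cons, Nat.sub_add_comm hr]

lemma offn_list {A : Type*} [Ring A] (b c : A) (m r : ℕ) (hrm : r ≤ m) :
    ∃ g : Fin m → A, (∀ i, g i = b ∨ g i = c) ∧
      (List.ofFn g).prod = b ^ r * c ^ (m - r) := by
  set l : List A := List.replicate r b ++ List.replicate (m - r) c with hl
  have hlen : l.length = m := by simp [hl]; omega
  refine ⟨fun i => l.get (Fin.cast hlen.symm i), ?_, ?_⟩
  · intro i
    have hmem : l.get (Fin.cast hlen.symm i) ∈ l := List.get_mem l _
    simp only [hl, List.mem_append, List.mem_replicate] at hmem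
    tauto
  · have hofn : List.ofFn (fun i => l.get (Fin.cast hlen.symm i)) = l := by
      refine List.ext_getElem (by simp [hlen]) ?_
      intro i h1 h2
      simp [List.getElem_ofFn]
    rw [hofn, hl, List.prod_append, List.prod_replicate, List.prod_replicate]

variable (k : Type*) [Field k] (q : k)

lemma qrel1 : qx k q 0 1 * qx k q 0 0 = q • (qx k q 0 0 * qx k q 0 1) := by
  unfold qx; rw [← map_mul, ← map_mul, ← map_smul]
  exact RingQuot.mkAlgHom_rel k QM2Rel.r1

lemma qrel2 : qx k q 1 0 * qx k q 0 0 = q • (qx k q 0 0 * qx k q 1 0) := by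
  unfold qx; rw [← map_mul, ← map_mul, ← map_smul]
  exact RingQuot.mkAlgHom_rel k QM2Rel.r2

lemma qrel3 : qx k q 1 1 * qx k q 0 1 = q • (qx k q 0 1 * qx k q 1 1) := by
  unfold qx; rw [← map_mul, ← map_mul, ← map_smul]
  exact RingQuot.mkAlgHom_rel k QM2Rel.r3

lemma qrel4 : qx k q 1 1 * qx k q 1 0 = q • (qx k q 1 0 * qx k q 1 1) := by
  unfold qx; rw [← map_mul, ← map_mul, ← map_smul]
  exact RingQuot.mkAlgHom_rel k QM2Rel.r4

lemma qrel5 : qx k q 1 0 * qx k q 0 1 = qx k q 0 1 * qx k q 1 0 := by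
  unfold qx; rw [← map_mul, ← map_mul]
  exact RingQuot.mkAlgHom_rel k QM2Rel.r5

lemma qrel6 : qx k q 1 1 * qx k q 0 0 =
    qx k q 0 0 * qx k q 1 1 + (q - q⁻¹) • (qx k q 0 1 * qx k q 1 0) := by
  unfold qx; rw [← map_mul, ← map_mul, ← map_mul, ← map_smul, ← map_add]
  exact RingQuot.mkAlgHom_rel k QM2Rel.r6

/-- The generators generate `O_q(M_2(k))`. -/
lemma qx_gen (A : Subalgebra k (QM2 k q)) (h : ∀ i j, qx k q i j ∈ A) (y : QM2 k q) :
    y ∈ A := by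
  obtain ⟨w, rfl⟩ := RingQuot.mkAlgHom_surjective k (QM2Rel k q) y
  induction w using FreeAlgebra.induction with
  | grade0 r => rw [AlgHom.commutes]; exact A.algebraMap_mem r
  | grade1 v => exact h v.1 v.2
  | mul x y hx hy => rw [map_mul]; exact A.mul_mem hx hy
  | add x y hx hy => rw [map_add]; exact A.add_mem hx hy

/-- The algebra map `FreeAlgebra → k[X₀,X₁]` sending `x i j ↦ X i` if `i = j` else `0`. -/
def Fmap : FreeAlgebra k (Fin 2 × Fin 2) →ₐ[k] MvPolynomial (Fin 2) k :=
  FreeAlgebra.lift k (fun v => if v.1 = v.2 then MvPolynomial.X v.1 else 0)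

/-- The quotient map `O_q(M_2(k)) → k[a,d]`. -/
def fQ : QM2 k q →ₐ[k] MvPolynomial (Fin 2) k :=
  RingQuot.liftAlgHom k ⟨Fmap k, by
    rintro x y ⟨⟩ <;>
      simp [Fmap, QM2Gen, map_mul, map_smul, map_add, mul_comm]⟩

lemma fQ_qx (i j : Fin 2) : fQ k q (qx k q i j) = if i = j then MvPolynomial.X i else 0 := by
  unfold fQ qx
  rw [RingQuot.liftAlgHom_mkAlgHom_apply]
  simp [Fmap, QM2Gen]

lemma fQ_surj : Function.Surjective (fQ k q) := by
  rw [← AlgHom.range_eq_top, ← top_le_iff, ← MvPolynomial.adjoin_range_X]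
  refine Algebra.adjoin_le ?_
  rintro _ ⟨i, rfl⟩
  fin_cases i
  · exact ⟨qx k q 0 0, by simp [fQ_qx]⟩
  · exact ⟨qx k q 1 1, by simp [fQ_qx]⟩

/-- The key property: the kernel of `fQ` is exactly the two-sided ideal `(b, c)`. -/
lemma mem_span_bc_iff (z : QM2 k q) :
    fQ k q z = 0 ↔ z ∈ TwoSidedIdeal.span ({qx k q 0 1, qx k q 1 0} : Set (QM2 k q)) := by
  set I := TwoSidedIdeal.span ({qx k q 0 1, qx k q 1 0} : Set (QM2 k q)) with hI
  set c0 := I.ringCon with hc0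
  letI : Algebra k c0.Quotient :=
    { smul := (· • ·)
      algebraMap := c0.mk'.comp (algebraMap k (QM2 k q))
      commutes' := by
        intro r x
        obtain ⟨y, rfl⟩ : ∃ y, c0.mk' y = x := Quot.exists_rep x
        show c0.mk' _ * c0.mk' y = c0.mk' y * c0.mk' _
        rw [← map_mul, ← map_mul, Algebra.commutes]
      smul_def' := by
        intro r x
        obtain ⟨y, rfl⟩ : ∃ y, c0.mk' y = x := Quot.exists_rep x
        show c0.mk' (r • y) = c0.mk' _ * c0.mk' y
        rw [← map_mul, Algebra.smul_def] }
  let π : QM2 k q →ₐ[k] c0.Quotient := { c0.mk' with commutes' := fun r => rfl }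
  have hπ0 : ∀ w : QM2 k q, π w = 0 ↔ w ∈ I := by
    intro w
    have h : π w = 0 ↔ c0.mk' w = c0.mk' 0 := by
      constructor <;> intro h
      · rw [show (c0.mk' 0 : c0.Quotient) = 0 from map_zero _]; exact h
      · rw [show π w = c0.mk' w from rfl, h, map_zero]
    rw [h]
    exact c0.eq.trans (I.mem_iff w).symm
  have hb : π (qx k q 0 1) = 0 := (hπ0 _).mpr (TwoSidedIdeal.subset_span (Set.mem_insert _ _))
  have hc : π (qx k q 1 0) = 0 :=
    (hπ0 _).mpr (TwoSidedIdeal.subset_span (Set.mem_insert_of_mem _ rfl))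
  have had : π (qx k q 0 0) * π (qx k q 1 1) = π (qx k q 1 1) * π (qx k q 0 0) := by
    have h6 := congrArg π (qrel6 k q)
    simp only [map_mul, map_add, map_smul, hb, zero_mul, smul_zero, add_zero] at h6
    exact h6.symm
  set s : Set c0.Quotient := {π (qx k q 0 0), π (qx k q 1 1)} with hs
  have hcomm : ∀ x ∈ s, ∀ y ∈ s, x * y = y * x := by
    rintro x hx y hy
    rcases hx with rfl | rfl <;> rcases hy with rfl | rfl
    · rfl
    · exact had
    · exact had.symm
    · rfl
  letI : CommSemiring (Algebra.adjoin k s) := Algebra.adjoinCommSemiringOfComm k hcomm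
  let g0 : MvPolynomial (Fin 2) k →ₐ[k] (Algebra.adjoin k s) :=
    MvPolynomial.aeval (fun i : Fin 2 =>
      if i = 0 then
        (⟨π (qx k q 0 0), Algebra.subset_adjoin (Set.mem_insert _ _)⟩ : Algebra.adjoin k s)
      else ⟨π (qx k q 1 1), Algebra.subset_adjoin (Set.mem_insert_of_mem _ rfl)⟩)
  let g : MvPolynomial (Fin 2) k →ₐ[k] c0.Quotient := (Algebra.adjoin k s).val.comp g0
  have hEq : ∀ w : QM2 k q, g (fQ k q w) = π w := by
    intro w
    refine (AlgHom.mem_equalizer (g.comp (fQ k q)) π w).mp (qx_gen k q _ ?_ w)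
    intro i j
    rw [AlgHom.mem_equalizer]
    fin_cases i <;> fin_cases j <;>
      simp [g, g0, AlgHom.comp_apply, fQ_qx, hb, hc, MvPolynomial.aeval_X]
  constructor
  · intro hfz
    have h : π z = 0 := by rw [← hEq z, hfz, map_zero]
    exact (hπ0 z).mp h
  · intro hz
    refine (TwoSidedIdeal.mem_ker (fQ k q)).mp
      (TwoSidedIdeal.mem_span_iff.mp hz (TwoSidedIdeal.ker (fQ k q)) ?_)
    rintro x hx
    rcases hx with rfl | rfl <;>
      · rw [SetLike.mem_coe, TwoSidedIdeal.mem_ker, fQ_qx]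
        simp

variable {k q}

/-- Any surjective algebra map `O_q(M_2(k)) → k[X₀,X₁]` kills `b` and `c`. -/
lemma kill (hq1 : q ≠ 1) (hq2 : q - q⁻¹ ≠ 0)
    (g : QM2 k q →ₐ[k] MvPolynomial (Fin 2) k) (hg : Function.Surjective g) :
    g (qx k q 0 1) = 0 ∧ g (qx k q 1 0) = 0 := by
  have halg : Function.Injective (algebraMap k (MvPolynomial (Fin 2) k)) :=
    fun a b h => MvPolynomial.C_injective _ _ h
  have mk0 : ∀ {u v : QM2 k q}, u * v = q • (v * u) → g v * g u = 0 := by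
    intro u v h
    have h' := congrArg g h
    simp only [map_mul, map_smul] at h'
    have h0 : (1 - algebraMap k (MvPolynomial (Fin 2) k) q) * (g v * g u) = 0 := by
      rw [sub_mul, one_mul, ← Algebra.smul_def, ← h', mul_comm, sub_self]
    rcases mul_eq_zero.mp h0 with h1 | h1
    · exact absurd (halg (by rw [map_one]; exact (sub_eq_zero.mp h1).symm)) hq1
    · exact h1
  have hab : g (qx k q 0 0) * g (qx k q 0 1) = 0 := mk0 (qrel1 k q)
  have hac : g (qx k q 0 0) * g (qx k q 1 0) = 0 := mk0 (qrel2 k q)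
  have hbd : g (qx k q 0 1) * g (qx k q 1 1) = 0 := mk0 (qrel3 k q)
  have hcd : g (qx k q 1 0) * g (qx k q 1 1) = 0 := mk0 (qrel4 k q)
  have hbc : g (qx k q 0 1) * g (qx k q 1 0) = 0 := by
    have h' := congrArg g (qrel6 k q)
    simp only [map_mul, map_add, map_smul] at h'
    rw [mul_comm (g (qx k q 1 1))] at h'
    have h2 : (q - q⁻¹) • (g (qx k q 0 1) * g (qx k q 1 0)) = 0 := by
      linear_combination -h'
    rw [Algebra.smul_def] at h2
    rcases mul_eq_zero.mp h2 with h3 | h3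
    · exact absurd (by rw [← map_zero (algebraMap k _)] at h3; exact halg h3) hq2
    · exact h3
  have adjcase : ∀ w : QM2 k q,
      (∀ i j : Fin 2, g (qx k q i j) ∈ Algebra.adjoin k {g w}) → False := by
    intro w hw
    have hall : ∀ y, g y ∈ Algebra.adjoin k {g w} := by
      intro y
      have h := qx_gen k q ((Algebra.adjoin k {g w}).comap g)
        (fun i j => (Subalgebra.mem_comap _ _ _).mpr (hw i j)) y
      exact (Subalgebra.mem_comap _ _ _).mp h
    obtain ⟨y0, hy0⟩ := hg (MvPolynomial.X 0)
    obtain ⟨y1, hy1⟩ := hg (MvPolynomial.X 1)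
    exact jac_aux k (g w) (hy0 ▸ hall y0) (hy1 ▸ hall y1)
  rcases mul_eq_zero.mp hbc with hb0 | hc0
  · refine ⟨hb0, ?_⟩
    by_contra hc0
    have ha0 : g (qx k q 0 0) = 0 := by
      rcases mul_eq_zero.mp hac with h | h
      · exact h
      · exact absurd h hc0
    have hd0 : g (qx k q 1 1) = 0 := by
      rcases mul_eq_zero.mp hcd with h | h
      · exact absurd h hc0
      · exact h
    exact adjcase (qx k q 1 0) (by
      intro i j
      fin_cases i <;> fin_cases j <;>
        simp [ha0, hb0, hd0, Algebra.self_mem_adjoin_singleton] <;> exact zero_mem _)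
  · refine ⟨?_, hc0⟩
    by_contra hb0
    have ha0 : g (qx k q 0 0) = 0 := by
      rcases mul_eq_zero.mp hab with h | h
      · exact h
      · exact absurd h hb0
    have hd0 : g (qx k q 1 1) = 0 := by
      rcases mul_eq_zero.mp hbd with h | h
      · exact absurd h hb0
      · exact h
    exact adjcase (qx k q 0 1) (by
      intro i j
      fin_cases i <;> fin_cases j <;>
        simp [ha0, hc0, hd0, Algebra.self_mem_adjoin_singleton] <;> exact zero_mem _)

end Aux

/-- every automorphism of `O_q(M_2(k))` fixes the two-sided ideal
`(b,c)`; moreover `(b,c)` is completely prime with quotient the (commutative)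
polynomial ring `k[a,d]`, and `(b,c)^m` (generated by the products of `m` factors
from `{b,c}`) is generated by `v = b^m`, `w = c^m` and `t_r = b^r c^{m-r}`,
`1 ≤ r ≤ m−1`. -/
theorem automorphisms_fix_bc (k : Type*) [Field k] [IsAlgClosed k] [CharZero k]
    (q : k) (m : ℕ) (hm3 : 3 ≤ m) (hmodd : Odd m) (hq : IsPrimitiveRoot q m) :
    (∀ σ : QM2 k q ≃ₐ[k] QM2 k q, ∀ z : QM2 k q,
      z ∈ TwoSidedIdeal.span ({qx k q 0 1, qx k q 1 0} : Set (QM2 k q)) ↔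
      σ z ∈ TwoSidedIdeal.span ({qx k q 0 1, qx k q 1 0} : Set (QM2 k q))) ∧
    -- `(b,c)` is completely prime
    (∀ x y : QM2 k q,
      x * y ∈ TwoSidedIdeal.span ({qx k q 0 1, qx k q 1 0} : Set (QM2 k q)) →
      x ∈ TwoSidedIdeal.span ({qx k q 0 1, qx k q 1 0} : Set (QM2 k q)) ∨
      y ∈ TwoSidedIdeal.span ({qx k q 0 1, qx k q 1 0} : Set (QM2 k q))) ∧
    -- the quotient by `(b,c)` is the polynomial ring `k[a,d]`
    (∃ f : QM2 k q →ₐ[k] MvPolynomial (Fin 2) k,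
      Function.Surjective f ∧
      f (qx k q 0 0) = MvPolynomial.X 0 ∧ f (qx k q 1 1) = MvPolynomial.X 1 ∧
      ∀ z : QM2 k q, f z = 0 ↔
        z ∈ TwoSidedIdeal.span ({qx k q 0 1, qx k q 1 0} : Set (QM2 k q))) ∧
    -- `(b,c)^m ∩ Z = (v, w, t_1, …, t_{m−1})`
    (∀ z ∈ Subalgebra.center k (QM2 k q),
      (z ∈ TwoSidedIdeal.span
          {x : QM2 k q | ∃ g : Fin m → QM2 k q,
            (∀ i, g i = qx k q 0 1 ∨ g i = qx k q 1 0) ∧ x = (List.ofFn g).prod} ↔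
       z ∈ TwoSidedIdeal.span
          ({qx k q 0 1 ^ m, qx k q 1 0 ^ m} ∪
            {x : QM2 k q | ∃ r, 1 ≤ r ∧ r ≤ m - 1 ∧
              x = qx k q 0 1 ^ r * qx k q 1 0 ^ (m - r)}))) := by
  have hq1 : q ≠ 1 := hq.ne_one (by omega)
  have hq0 : q ≠ 0 := hq.ne_zero (by omega)
  have hq2 : q - q⁻¹ ≠ 0 := by
    intro h
    have hqq : q ^ 2 = 1 := by
      have hqi : q = q⁻¹ := sub_eq_zero.mp h
      calc q ^ 2 = q * q := sq q
      _ = q * q⁻¹ := by rw [← hqi]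
      _ = 1 := mul_inv_cancel₀ hq0
    have hdvd : m ∣ 2 := hq.dvd_of_pow_eq_one 2 hqq
    exact absurd (Nat.le_of_dvd (by norm_num) hdvd) (by omega)
  have hker := mem_span_bc_iff k q
  have hsurj := fQ_surj k q
  -- Part 1
  have main : ∀ (σ : QM2 k q ≃ₐ[k] QM2 k q) (z : QM2 k q),
      z ∈ TwoSidedIdeal.span ({qx k q 0 1, qx k q 1 0} : Set (QM2 k q)) →
      σ z ∈ TwoSidedIdeal.span ({qx k q 0 1, qx k q 1 0} : Set (QM2 k q)) := by
    intro σ z hz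
    have hkill := kill hq1 hq2 ((fQ k q).comp σ.toAlgHom)
      (hsurj.comp σ.surjective)
    have hσb : σ (qx k q 0 1) ∈ TwoSidedIdeal.span ({qx k q 0 1, qx k q 1 0} : Set (QM2 k q)) :=
      (hker _).mp hkill.1
    have hσc : σ (qx k q 1 0) ∈ TwoSidedIdeal.span ({qx k q 0 1, qx k q 1 0} : Set (QM2 k q)) :=
      (hker _).mp hkill.2
    have hmem := TwoSidedIdeal.mem_span_iff.mp hz
      ((TwoSidedIdeal.span ({qx k q 0 1, qx k q 1 0} : Set (QM2 k q))).comap σ.toAlgHom) ?_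
    · exact (TwoSidedIdeal.mem_comap σ.toAlgHom).mp hmem
    · rintro x hx
      rcases hx with rfl | rfl
      · exact (TwoSidedIdeal.mem_comap σ.toAlgHom).mpr hσb
      · exact (TwoSidedIdeal.mem_comap σ.toAlgHom).mpr hσc
  refine ⟨fun σ z => ⟨main σ z, fun h => ?_⟩, ?_, ⟨fQ k q, hsurj, by simpa using fQ_qx k q 0 0,
    by simpa using fQ_qx k q 1 1, fun z => hker z⟩, ?_⟩
  · have h2 := main σ.symm _ h
    simpa using h2
  · -- completely prime
    intro x y hxy
    have hfxy : fQ k q x * fQ k q y = 0 := by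
      rw [← map_mul]
      exact (hker _).mpr hxy
    rcases mul_eq_zero.mp hfxy with h | h
    · exact Or.inl ((hker _).mp h)
    · exact Or.inr ((hker _).mp h)
  · -- the span equality
    intro z _
    have hcb := qrel5 k q
    constructor
    · intro h
      refine TwoSidedIdeal.mem_span_iff.mp h _ ?_
      rintro x ⟨g, hg, rfl⟩
      have hmem2 : ∀ x ∈ List.ofFn g, x = qx k q 0 1 ∨ x = qx k q 1 0 := by
        intro x hx
        rw [List.mem_ofFn] at hx
        obtain ⟨i, rfl⟩ := hx
        exact hg i
      obtain ⟨r, hr, hprod⟩ := list_prod_bc (qx k q 0 1) (qx k q 1 0) hcb (List.ofFn g) hmem2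
      rw [List.length_ofFn] at hr hprod
      rw [SetLike.mem_coe, hprod]
      by_cases hr0 : r = 0
      · subst hr0
        rw [pow_zero, one_mul, Nat.sub_zero]
        exact TwoSidedIdeal.subset_span (Or.inl (Set.mem_insert_of_mem _ rfl))
      · by_cases hrm : r = m
        · subst hrm
          rw [Nat.sub_self, pow_zero, mul_one]
          exact TwoSidedIdeal.subset_span (Or.inl (Set.mem_insert _ _))
        · exact TwoSidedIdeal.subset_span
            (Or.inr ⟨r, by omega, by omega, rfl⟩)
    · intro h
      refine TwoSidedIdeal.mem_span_iff.mp h _ ?_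
      rintro x (hx | ⟨r, hr1, hrm, rfl⟩)
      · rcases hx with rfl | rfl
        · exact TwoSidedIdeal.subset_span
            ⟨fun _ => qx k q 0 1, fun i => Or.inl rfl,
              by rw [List.ofFn_const, List.prod_replicate]⟩
        · exact TwoSidedIdeal.subset_span
            ⟨fun _ => qx k q 1 0, fun i => Or.inr rfl,
              by rw [List.ofFn_const, List.prod_replicate]⟩
      · obtain ⟨g, hgbc, hgp⟩ := offn_list (qx k q 0 1) (qx k q 1 0) m r (by omega)
        exact TwoSidedIdeal.subset_span ⟨g, hgbc, hgp.symm⟩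

end
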